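/- Let n ≥ 1 and work in the formal power series ring ℂ⟦z₁,…,zₙ,w₁,…,wₙ⟧. Let σ : ℂ⟦z₁,…,zₙ⟧ → ℂ⟦z,w⟧ be the natural inclusion, and let τ : ℂ⟦z₁,…,zₙ⟧ → ℂ⟦z,w⟧ be the ring homomorphism sending a series Σ a_I z^I to Σ conj(a_I) w^I (coefficientwise complex conjugation and substitution zᵢ ↦ wᵢ). Let f₁,…,f_k ∈ ℂ⟦z₁,…,zₙ⟧ have zero constant term. If g ∈ ℂ⟦z₁,…,zₙ⟧ satisfies σ(g) ∈ (σ(f₁),…,σ(f_k), τ(f₁),…,τ(f_k)) as an ideal of ℂ⟦z,w⟧, then g ∈ (f₁,…,f_k) in ℂ⟦z₁,…,zₙ⟧. -/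

import Mathlib

open scoped Classical

namespace Stmt18

variable (n : ℕ)

/-- Embedding of exponents `z`-exponents into `(z,w)`-exponents. -/
noncomputable def emb (d : Fin n →₀ ℕ) : (Fin n ⊕ Fin n) →₀ ℕ :=
  Finsupp.mapDomain Sum.inl d

lemma emb_inl (d : Fin n →₀ ℕ) (i : Fin n) : emb n d (Sum.inl i) = d i :=
  Finsupp.mapDomain_apply Sum.inl_injective d i

lemma emb_inr (d : Fin n →₀ ℕ) (j : Fin n) : emb n d (Sum.inr j) = 0 :=
  Finsupp.mapDomain_notin_range d _ (by simp)

/-- Restriction of a `(z,w)`-exponent to its `z`-part. -/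
noncomputable def res (e : (Fin n ⊕ Fin n) →₀ ℕ) : Fin n →₀ ℕ :=
  Finsupp.equivFunOnFinite.symm fun i => e (Sum.inl i)

lemma res_apply (e : (Fin n ⊕ Fin n) →₀ ℕ) (i : Fin n) : res n e i = e (Sum.inl i) := rfl

lemma res_emb (d : Fin n →₀ ℕ) : res n (emb n d) = d := by
  ext i; rw [res_apply, emb_inl]

lemma emb_res (e : (Fin n ⊕ Fin n) →₀ ℕ) (he : ∀ j, e (Sum.inr j) = 0) :
    emb n (res n e) = e := by
  ext x
  cases x with
  | inl i => rw [emb_inl, res_apply]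
  | inr j => rw [emb_inr, he j]

/-- The "set `w = 0`" map on power series, defined coefficientwise. -/
noncomputable def piF (F : MvPowerSeries (Fin n ⊕ Fin n) ℂ) : MvPowerSeries (Fin n) ℂ :=
  fun d => MvPowerSeries.coeff (emb n d) F

lemma coeff_piF (F : MvPowerSeries (Fin n ⊕ Fin n) ℂ) (d : Fin n →₀ ℕ) :
    MvPowerSeries.coeff d (piF n F) = MvPowerSeries.coeff (emb n d) F := rfl

lemma piF_zero : piF n 0 = 0 := by
  ext d; rw [coeff_piF]; simp

lemma emb_add (d₁ d₂ : Fin n →₀ ℕ) : emb n (d₁ + d₂) = emb n d₁ + emb n d₂ :=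
  Finsupp.mapDomain_add

lemma piF_add (a b : MvPowerSeries (Fin n ⊕ Fin n) ℂ) :
    piF n (a + b) = piF n a + piF n b := by
  ext d; rw [map_add, coeff_piF, coeff_piF, coeff_piF, map_add]

lemma piF_mul (a b : MvPowerSeries (Fin n ⊕ Fin n) ℂ) :
    piF n (a * b) = piF n a * piF n b := by
  ext d
  rw [coeff_piF, MvPowerSeries.coeff_mul, MvPowerSeries.coeff_mul]
  simp only [coeff_piF]
  refine Finset.sum_nbij' (fun q => (res n q.1, res n q.2))
      (fun p => (emb n p.1, emb n p.2)) ?_ ?_ ?_ ?_ ?_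
  · rintro ⟨e₁, e₂⟩ hq
    rw [Finset.HasAntidiagonal.mem_antidiagonal] at hq ⊢
    have h1 : ∀ j, e₁ (Sum.inr j) = 0 := by
      intro j
      have := congrArg (fun e : (Fin n ⊕ Fin n) →₀ ℕ => e (Sum.inr j)) hq
      simp only [Finsupp.add_apply, emb_inr] at this
      omega
    have h2 : ∀ j, e₂ (Sum.inr j) = 0 := by
      intro j
      have := congrArg (fun e : (Fin n ⊕ Fin n) →₀ ℕ => e (Sum.inr j)) hq
      simp only [Finsupp.add_apply, emb_inr] at this
      omega
    have : emb n (res n e₁ + res n e₂) = emb n d := by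
      rw [emb_add, emb_res n e₁ h1, emb_res n e₂ h2, hq]
    exact Finsupp.mapDomain_injective Sum.inl_injective this
  · rintro ⟨d₁, d₂⟩ hp
    rw [Finset.HasAntidiagonal.mem_antidiagonal] at hp ⊢
    rw [← emb_add, hp]
  · rintro ⟨e₁, e₂⟩ hq
    rw [Finset.HasAntidiagonal.mem_antidiagonal] at hq
    have h1 : ∀ j, e₁ (Sum.inr j) = 0 := by
      intro j
      have := congrArg (fun e : (Fin n ⊕ Fin n) →₀ ℕ => e (Sum.inr j)) hq
      simp only [Finsupp.add_apply, emb_inr] at this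
      omega
    have h2 : ∀ j, e₂ (Sum.inr j) = 0 := by
      intro j
      have := congrArg (fun e : (Fin n ⊕ Fin n) →₀ ℕ => e (Sum.inr j)) hq
      simp only [Finsupp.add_apply, emb_inr] at this
      omega
    simp [emb_res n e₁ h1, emb_res n e₂ h2]
  · rintro ⟨d₁, d₂⟩ _
    simp [res_emb]
  · rintro ⟨e₁, e₂⟩ hq
    rw [Finset.HasAntidiagonal.mem_antidiagonal] at hq
    have h1 : ∀ j, e₁ (Sum.inr j) = 0 := by
      intro j
      have := congrArg (fun e : (Fin n ⊕ Fin n) →₀ ℕ => e (Sum.inr j)) hq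
      simp only [Finsupp.add_apply, emb_inr] at this
      omega
    have h2 : ∀ j, e₂ (Sum.inr j) = 0 := by
      intro j
      have := congrArg (fun e : (Fin n ⊕ Fin n) →₀ ℕ => e (Sum.inr j)) hq
      simp only [Finsupp.add_apply, emb_inr] at this
      omega
    simp [emb_res n e₁ h1, emb_res n e₂ h2]

end Stmt18

/-- if a formal power series `g` in `z₁,…,zₙ` lies, after the inclusion
`σ : ℂ⟦z⟧ → ℂ⟦z,w⟧`, in the ideal generated by `σ(f₁),…,σ(f_k),τ(f₁),…,τ(f_k)` — where
`τ` conjugates coefficients and substitutes `zᵢ ↦ wᵢ` — then `g ∈ (f₁,…,f_k)` already in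
`ℂ⟦z⟧`. Here `σ` and `τ` are characterized by their action on coefficients. -/
theorem mem_ideal_of_complexified_mem
    (n k : ℕ) (hn : 1 ≤ n)
    (σ τ : MvPowerSeries (Fin n) ℂ →+* MvPowerSeries (Fin n ⊕ Fin n) ℂ)
    (hσ : ∀ (g : MvPowerSeries (Fin n) ℂ) (e : (Fin n ⊕ Fin n) →₀ ℕ),
      MvPowerSeries.coeff e (σ g) =
        if ∀ j : Fin n, e (Sum.inr j) = 0
        then MvPowerSeries.coeff (Finsupp.equivFunOnFinite.symm fun i => e (Sum.inl i)) g
        else 0)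
    (hτ : ∀ (g : MvPowerSeries (Fin n) ℂ) (e : (Fin n ⊕ Fin n) →₀ ℕ),
      MvPowerSeries.coeff e (τ g) =
        if ∀ i : Fin n, e (Sum.inl i) = 0
        then (starRingEnd ℂ)
          (MvPowerSeries.coeff (Finsupp.equivFunOnFinite.symm fun j => e (Sum.inr j)) g)
        else 0)
    (f : Fin k → MvPowerSeries (Fin n) ℂ)
    (hf : ∀ i, MvPowerSeries.constantCoeff (f i) = 0)
    (g : MvPowerSeries (Fin n) ℂ)
    (hg : σ g ∈ Ideal.span (Set.range (σ ∘ f) ∪ Set.range (τ ∘ f))) :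
    g ∈ Ideal.span (Set.range f) := by
  have hπσ : ∀ h : MvPowerSeries (Fin n) ℂ, Stmt18.piF n (σ h) = h := by
    intro h
    ext d
    rw [Stmt18.coeff_piF, hσ, if_pos (fun j => Stmt18.emb_inr n d j)]
    exact congrArg (fun e => MvPowerSeries.coeff e h) (Stmt18.res_emb n d)
  have hπτ : ∀ i, Stmt18.piF n (τ (f i)) = 0 := by
    intro i
    ext d
    rw [Stmt18.coeff_piF, hτ]
    split_ifs with h
    · have hd : (Finsupp.equivFunOnFinite.symm fun j => Stmt18.emb n d (Sum.inr j))
          = (0 : Fin n →₀ ℕ) := by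
        ext j
        simp [Stmt18.emb_inr]
      rw [hd, MvPowerSeries.coeff_zero_eq_constantCoeff_apply, hf i]
      simp
    · simp
  have key : Stmt18.piF n (σ g) ∈ Ideal.span (Set.range f) := by
    refine Submodule.span_induction ?_ ?_ ?_ ?_ hg
    · rintro x (⟨i, rfl⟩ | ⟨i, rfl⟩)
      · rw [Function.comp_apply, hπσ (f i)]
        exact Ideal.subset_span (Set.mem_range_self i)
      · rw [Function.comp_apply, hπτ i]
        exact Ideal.zero_mem _
    · rw [Stmt18.piF_zero]
      exact Ideal.zero_mem _
    · intro x y _ _ hx hy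
      rw [Stmt18.piF_add]
      exact Ideal.add_mem _ hx hy
    · intro a x _ hx
      rw [smul_eq_mul, Stmt18.piF_mul]
      exact Ideal.mul_mem_left _ _ hx
  rwa [hπσ g] at key
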